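/- Let V be a finite-dimensional commutative real algebra with a positive definite associative symmetric bilinear form, and let c ≠ 0 be an idempotent such that the Peirce eigenspace V_c(1) = {x : cx = x} is a subalgebra of V. Then dim V_c(1) = 1 if and only if c is indecomposable (c cannot be written as a sum of two nonzero idempotents whose product is zero). -/

import Mathlib

open Real RealInnerProductSpace

set_option maxHeartbeats 2000000 in
/-- for a nonzero idempotent `c` whose Peirce eigenspace `V_c(1)` is a
subalgebra, `dim V_c(1) = 1` iff `c` is indecomposable (not a sum of two nonzero
idempotents with zero product). -/
theorem stmt_12 {V : Type*} [AddCommGroup V] [Module ℝ V] [FiniteDimensional ℝ V]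
    (mul : V →ₗ[ℝ] V →ₗ[ℝ] V) (hcomm : ∀ x y, mul x y = mul y x)
    (B : V →ₗ[ℝ] V →ₗ[ℝ] ℝ) (hsymm : ∀ x y, B x y = B y x)
    (hassoc : ∀ x y z, B (mul x y) z = B x (mul y z))
    (hpos : ∀ x, x ≠ 0 → 0 < B x x)
    (c : V) (hc : mul c c = c) (hc0 : c ≠ 0)
    (hsub : ∀ x y, mul c x = x → mul c y = y → mul c (mul x y) = mul x y) :
    Module.finrank ℝ (Module.End.eigenspace (mul c) 1) = 1 ↔
      ¬ ∃ c₁ c₂ : V, mul c₁ c₁ = c₁ ∧ mul c₂ c₂ = c₂ ∧ c₁ ≠ 0 ∧ c₂ ≠ 0 ∧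
        mul c₁ c₂ = 0 ∧ c = c₁ + c₂ := by
  classical
  constructor
  · -- easy direction
    intro hfr
    rintro ⟨c₁, c₂, h1, h2, hn1, hn2, h12, hcsum⟩
    subst hcsum
    set A := Module.End.eigenspace (mul (c₁ + c₂)) 1 with hA
    have hm1 : c₁ ∈ A := by
      rw [Module.End.mem_eigenspace_iff, one_smul]
      show mul (c₁ + c₂) c₁ = c₁
      rw [map_add, LinearMap.add_apply, h1, hcomm c₂ c₁, h12, add_zero]
    have hm2 : c₂ ∈ A := by
      rw [Module.End.mem_eigenspace_iff, one_smul]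
      show mul (c₁ + c₂) c₂ = c₂
      rw [map_add, LinearMap.add_apply, h2, h12, zero_add]
    have h2ne : (⟨c₂, hm2⟩ : A) ≠ 0 := by
      simp only [ne_eq, Submodule.mk_eq_zero]; exact hn2
    rw [finrank_eq_one_iff_of_nonzero (⟨c₂, hm2⟩ : A) h2ne] at hfr
    have : (⟨c₁, hm1⟩ : A) ∈ Submodule.span ℝ {(⟨c₂, hm2⟩ : A)} := hfr ▸ Submodule.mem_top
    obtain ⟨r, hr⟩ := Submodule.mem_span_singleton.mp this
    have hr' : c₁ = r • c₂ := by
      have := congrArg (Subtype.val) hr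
      simpa using this.symm
    rw [hr', map_smul, LinearMap.smul_apply, h2] at h12
    rcases smul_eq_zero.mp h12 with h | h
    · exact hn1 (by rw [hr', h, zero_smul])
    · exact hn2 h
  · -- hard direction, by contraposition
    intro hne
    by_contra hfr
    apply hne
    clear hne
    set A := Module.End.eigenspace (mul c) 1 with hA
    have memA : ∀ x, x ∈ A ↔ mul c x = x := by
      intro x; rw [hA, Module.End.mem_eigenspace_iff, one_smul]
    have hcA : c ∈ A := (memA c).mpr hc
    have hmulA : ∀ x ∈ A, ∀ y ∈ A, mul x y ∈ A := by
      intro x hx y hy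
      exact (memA _).mpr (hsub x y ((memA x).mp hx) ((memA y).mp hy))
    have hB0 : ∀ x : V, 0 ≤ B x x := by
      intro x
      rcases eq_or_ne x 0 with rfl | h
      · simp
      · exact le_of_lt (hpos x h)
    have hBzero : ∀ x : V, B x x = 0 → x = 0 := by
      intro x hx
      by_contra hne
      exact absurd hx (ne_of_gt (hpos x hne))
    have hBcc : 0 < B c c := hpos c hc0
    -- an element of A orthogonal to c, with B h' h' = B c c and u h' ≤ 0
    set u : V → ℝ := fun x => B (mul x x) x with hu_def
    have uneg : ∀ x, u (-x) = - u x := by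
      intro x; simp [hu_def]
    obtain ⟨h', hh'A, hch', hh'h', huh'⟩ :
        ∃ h', h' ∈ A ∧ B c h' = 0 ∧ B h' h' = B c c ∧ u h' ≤ 0 := by
      obtain ⟨a, haA, ha⟩ : ∃ a ∈ A, a ∉ Submodule.span ℝ {c} := by
        by_contra hcon
        push_neg at hcon
        have hle : A ≤ Submodule.span ℝ {c} := hcon
        have h1 : Module.finrank ℝ A ≤ Module.finrank ℝ (Submodule.span ℝ {c}) :=
          Submodule.finrank_mono hle
        rw [finrank_span_singleton hc0] at h1
        have h0 : Module.finrank ℝ A ≠ 0 := by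
          intro h0
          rw [Submodule.finrank_eq_zero] at h0
          rw [h0] at hcA
          exact hc0 (Submodule.mem_bot ℝ |>.mp hcA)
        omega
      set h₀ := a - (B a c / B c c) • c with hh₀
      have hh₀A : h₀ ∈ A := Submodule.sub_mem A haA (Submodule.smul_mem A _ hcA)
      have hh₀ne : h₀ ≠ 0 := by
        intro h0
        apply ha
        have : a = (B a c / B c c) • c := by
          have := sub_eq_zero.mp h0
          linear_combination (norm := module) this
        rw [this]
        exact Submodule.smul_mem _ _ (Submodule.mem_span_singleton_self c)
      have hch₀ : B c h₀ = 0 := by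
        simp only [hh₀, map_sub, map_smul, LinearMap.sub_apply, LinearMap.smul_apply]
        rw [hsymm c a]
        rw [smul_eq_mul, div_mul_cancel₀ _ hBcc.ne', sub_self]
      have hpos₀ : 0 < B h₀ h₀ := hpos _ hh₀ne
      set t := Real.sqrt (B c c / B h₀ h₀) with ht
      have ht2 : t ^ 2 = B c c / B h₀ h₀ := Real.sq_sqrt (le_of_lt (by positivity))
      set h₁ := t • h₀ with hh₁
      have hBh₁ : B h₁ h₁ = B c c := by
        simp only [hh₁, map_smul, LinearMap.smul_apply, smul_eq_mul]
        have : t * (t * B h₀ h₀) = t ^ 2 * B h₀ h₀ := by ring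
        rw [this, ht2]
        field_simp
      have hch₁ : B c h₁ = 0 := by
        simp only [hh₁, map_smul, smul_eq_mul, hch₀, mul_zero]
      have hh₁A : h₁ ∈ A := Submodule.smul_mem A t hh₀A
      rcases le_or_gt (u h₁) 0 with h | h
      · exact ⟨h₁, hh₁A, hch₁, hBh₁, h⟩
      · refine ⟨-h₁, Submodule.neg_mem A hh₁A, by simp [hch₁], by simp [hBh₁], ?_⟩
        rw [uneg]; linarith
    -- the inner-product space structure induced by B
    letI core : InnerProductSpace.Core ℝ V :=
      { inner := fun x y => B x y
        conj_inner_symm := fun x y => by simpa using hsymm y x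
        re_inner_nonneg := fun x => by simpa using hB0 x
        add_left := fun x y z => by simp
        smul_left := fun x y r => by simp
        definite := fun x hx => hBzero x (by simpa using hx) }
    letI : NormedAddCommGroup V := core.toNormedAddCommGroup
    letI : InnerProductSpace ℝ V := InnerProductSpace.ofCore core.toCore
    letI : SeminormedAddCommGroup (V →L[ℝ] V) := ContinuousLinearMap.toSeminormedAddCommGroup
    letI : NormedSpace ℝ (V →L[ℝ] V) := ContinuousLinearMap.toNormedSpace
    have inner_eq : ∀ x y : V, ⟪x, y⟫ = B x y := fun _ _ => rfl
    have hBnorm : ∀ x : V, B x x = ‖x‖ ^ 2 := fun x => by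
      rw [← inner_eq]; exact real_inner_self_eq_norm_sq x
    have norm_eq_one : ∀ x : V, B x x = 1 → ‖x‖ = 1 := by
      intro x hx
      have := hBnorm x
      rw [hx] at this
      nlinarith [norm_nonneg x]
    haveI : ProperSpace V := FiniteDimensional.proper ℝ V
    set Mc : V →L[ℝ] V →L[ℝ] V := LinearMap.toContinuousLinearMap
      { toFun := fun x => LinearMap.toContinuousLinearMap (mul x)
        map_add' := fun x y => by ext z; simp
        map_smul' := fun r x => by ext z; simp } with hMc
    have Mc_apply : ∀ x y : V, Mc x y = mul x y := fun x y => rfl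
    have hu_cont : Continuous u := by
      have h1 : Continuous fun x : V => Mc x x :=
        (Mc.continuous₂).comp (continuous_id.prodMk continuous_id)
      have h2 : Continuous fun x : V => ⟪Mc x x, x⟫ := h1.inner continuous_id
      simpa [inner_eq, Mc_apply, hu_def] using h2
    have u_smul : ∀ (r : ℝ) (x : V), u (r • x) = r ^ 3 * u x := by
      intro r x
      simp only [hu_def, map_smul, LinearMap.smul_apply, smul_eq_mul]
      ring
    -- the compact constraint set
    set S : Set V := (A : Set V) ∩ Metric.sphere 0 1 with hS
    have hScomp : IsCompact S := by
      have h1 : IsClosed (A : Set V) := Submodule.closed_of_finiteDimensional A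
      exact (isCompact_sphere (0 : V) 1).inter_left h1
    have rpow_sq : ∀ m : ℝ, 0 < m → m ^ (-(1:ℝ)/2) * (m ^ (-(1:ℝ)/2) * m) = 1 := by
      intro m hm
      have h1 : m ^ (-(1:ℝ)/2) * (m ^ (-(1:ℝ)/2) * m) = m ^ ((-(1:ℝ)/2) + ((-(1:ℝ)/2) + 1)) := by
        rw [Real.rpow_add hm, Real.rpow_add hm, Real.rpow_one]
      rw [h1]
      norm_num
    have rpow_cube : ∀ m : ℝ, 0 < m → (m ^ (-(1:ℝ)/2)) ^ 3 = m ^ (-(3:ℝ)/2) := by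
      intro m hm
      rw [← Real.rpow_natCast (m ^ (-(1:ℝ)/2)) 3, ← Real.rpow_mul hm.le]
      norm_num
    have hSne : S.Nonempty := by
      refine ⟨(B c c) ^ (-(1:ℝ)/2) • c, Submodule.smul_mem A _ hcA, ?_⟩
      rw [mem_sphere_zero_iff_norm]
      apply norm_eq_one
      simp only [map_smul, LinearMap.smul_apply, smul_eq_mul]
      exact rpow_sq _ hBcc
    -- the minimizer
    obtain ⟨x₀, hx₀S, hmin⟩ := hScomp.exists_isMinOn hSne hu_cont.continuousOn
    obtain ⟨hx₀A, hx₀sph⟩ := hx₀S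
    have hx₀norm : ‖x₀‖ = 1 := mem_sphere_zero_iff_norm.mp hx₀sph
    have hx₀B : B x₀ x₀ = 1 := by rw [hBnorm, hx₀norm]; norm_num
    have hx₀ne : x₀ ≠ 0 := by
      intro h; rw [h, norm_zero] at hx₀norm; norm_num at hx₀norm
    set u₀ : ℝ := u x₀ with hu₀
    -- the key minimality claim for arbitrary nonzero elements of A
    have key : ∀ z, z ∈ A → z ≠ 0 → u₀ ≤ u z * (B z z) ^ (-(3:ℝ)/2) := by
      intro z hzA hzne
      have hBz : 0 < B z z := hpos z hzne
      set t : ℝ := (B z z) ^ (-(1:ℝ)/2) with htdef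
      have hw : t • z ∈ S := by
        refine ⟨Submodule.smul_mem A t hzA, ?_⟩
        rw [mem_sphere_zero_iff_norm]
        apply norm_eq_one
        simp only [map_smul, LinearMap.smul_apply, smul_eq_mul]
        exact rpow_sq _ hBz
      have h1 : u₀ ≤ u (t • z) := hmin hw
      rw [u_smul, htdef, rpow_cube _ hBz] at h1
      linarith [h1]
    -- first order condition
    have foc : ∀ h, h ∈ A → B (mul x₀ x₀) h = u₀ * B x₀ h := by
      intro h hhA
      set γ : ℝ → V := fun s => x₀ + s • h with hγdef
      have hγ0 : γ 0 = x₀ := by simp [hγdef]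
      have hγd : HasDerivAt γ h 0 := by
        simpa [hγdef] using ((hasDerivAt_id (0:ℝ)).smul_const h).const_add x₀
      set φ : ℝ → ℝ := fun s => ⟪Mc (γ s) (γ s), γ s⟫ * (⟪γ s, γ s⟫) ^ (-(3:ℝ)/2) with hφdef
      have hloc : IsLocalMin φ 0 := by
        have hev : ∀ᶠ s in nhds (0:ℝ), φ 0 ≤ φ s := by
          rw [Metric.eventually_nhds_iff]
          refine ⟨1/(‖h‖+1), by positivity, ?_⟩
          intro s hs
          rw [Real.dist_eq, sub_zero] at hs
          have hsn : ‖s • h‖ < 1 := by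
            rw [norm_smul, Real.norm_eq_abs]
            have h1 : |s| * (‖h‖+1) < (1/(‖h‖+1)) * (‖h‖+1) :=
              mul_lt_mul_of_pos_right hs (by positivity)
            have h2 : (1/(‖h‖+1)) * (‖h‖+1) = 1 := by field_simp
            nlinarith [abs_nonneg s, norm_nonneg h]
          have hzne : γ s ≠ 0 := by
            intro h0
            have hx : x₀ = -(s • h) := by
              have : x₀ + s • h = 0 := h0
              linear_combination (norm := module) this
            rw [← hx₀norm, hx, norm_neg] at hsn
            exact lt_irrefl _ hsn
          have hmem : γ s ∈ A := Submodule.add_mem A hx₀A (Submodule.smul_mem A s hhA)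
          have hk := key (γ s) hmem hzne
          have hφs : φ s = u (γ s) * (B (γ s) (γ s)) ^ (-(3:ℝ)/2) := by
            simp only [hφdef, inner_eq, Mc_apply, hu_def]
          have hφ0 : φ 0 = u₀ := by
            simp only [hφdef, hγ0, inner_eq, Mc_apply, hu_def, hx₀B, hu₀]
            rw [Real.one_rpow, mul_one]
          rw [hφs, hφ0]
          exact hk
        exact hev
      have hgg : HasDerivAt (fun s => Mc (γ s)) (Mc h) 0 := by
        have h1 : (fun s => Mc (γ s)) = fun s => Mc x₀ + s • Mc h := by
          funext s; simp [hγdef]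
        rw [h1]
        have h2 := ((hasDerivAt_id (0:ℝ)).smul_const (Mc h)).const_add (Mc x₀)
        rw [one_smul] at h2
        exact h2
      have hP1 : HasDerivAt (fun s => Mc (γ s) (γ s)) (Mc h x₀ + Mc x₀ h) 0 := by
        have := hgg.clm_apply hγd
        rwa [hγ0] at this
      have hP : HasDerivAt (fun s => (⟪Mc (γ s) (γ s), γ s⟫ : ℝ))
          (⟪Mc x₀ x₀, h⟫ + ⟪Mc h x₀ + Mc x₀ h, x₀⟫) 0 := by
        have := hP1.inner (𝕜 := ℝ) hγd
        rwa [hγ0] at this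
      have hQ : HasDerivAt (fun s => (⟪γ s, γ s⟫ : ℝ)) (⟪x₀, h⟫ + ⟪h, x₀⟫) 0 := by
        have := hγd.inner (𝕜 := ℝ) hγd
        rwa [hγ0] at this
      have hQ0 : (⟪γ 0, γ 0⟫ : ℝ) = 1 := by rw [hγ0, inner_eq, hx₀B]
      have hR : HasDerivAt (fun s => (⟪γ s, γ s⟫ : ℝ) ^ (-(3:ℝ)/2))
          ((⟪x₀, h⟫ + ⟪h, x₀⟫) * (-(3:ℝ)/2) * (1:ℝ) ^ (-(3:ℝ)/2 - 1)) 0 := by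
        have := hQ.rpow_const (p := -(3:ℝ)/2) (Or.inl (by rw [hQ0]; norm_num))
        rwa [hQ0] at this
      have hφd := hP.mul hR
      have hz := hloc.hasDerivAt_eq_zero hφd
      simp only [hγ0, hQ0, inner_eq, Mc_apply, map_add, LinearMap.add_apply, hx₀B,
        Real.one_rpow, mul_one, one_mul] at hz
      have e1 : B (mul h x₀) x₀ = B (mul x₀ x₀) h := by rw [hassoc, hsymm]
      have e2 : B (mul x₀ h) x₀ = B (mul x₀ x₀) h := by rw [hcomm x₀ h, e1]
      have e3 : B h x₀ = B x₀ h := hsymm h x₀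
      rw [e1, e2, e3] at hz
      linarith
    -- x₀ is an idempotent up to scaling
    have hx₀sq : mul x₀ x₀ = u₀ • x₀ := by
      have hvA : mul x₀ x₀ - u₀ • x₀ ∈ A :=
        Submodule.sub_mem A (hmulA x₀ hx₀A x₀ hx₀A) (Submodule.smul_mem A u₀ hx₀A)
      have h0 : B (mul x₀ x₀ - u₀ • x₀) (mul x₀ x₀ - u₀ • x₀) = 0 := by
        have hfoc := foc _ hvA
        simp only [map_sub, map_smul, LinearMap.sub_apply, LinearMap.smul_apply,
          smul_eq_mul] at hfoc ⊢
        linarith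
      exact sub_eq_zero.mp (hBzero _ h0)
    -- the comparison element y and the bound on u₀
    set m := B c c with hm
    set y : V := -c + h' with hy
    have hyA : y ∈ A := Submodule.add_mem A (Submodule.neg_mem A hcA) hh'A
    have hych' : mul c h' = h' := (memA h').mp hh'A
    have hyB : B y y = 2 * m := by
      simp only [hy, map_add, map_neg, LinearMap.add_apply, LinearMap.neg_apply, neg_neg]
      rw [hch', hsymm h' c, hch', hh'h']
      ring
    have hyne : y ≠ 0 := by
      intro h0
      rw [h0] at hyB
      simp only [map_zero, LinearMap.zero_apply] at hyB
      linarith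
    have hwc : B (mul h' h') c = m := by
      have : B (mul h' h') c = B (mul h' c) h' := by
        rw [hassoc, hassoc, hcomm c h']
      rw [this, hcomm h' c, hych', hh'h']
    have huy : u y = -4 * m + u h' := by
      have hymul : mul y y = c - (2:ℝ) • h' + mul h' h' := by
        simp only [hy, map_add, map_neg, LinearMap.add_apply, LinearMap.neg_apply, neg_neg, hc,
          hych', hcomm h' c]
        module
      show B (mul y y) y = -4 * m + u h'
      rw [hymul]
      simp only [hy, map_add, map_sub, map_neg, map_smul, LinearMap.add_apply,
        LinearMap.sub_apply, LinearMap.neg_apply, LinearMap.smul_apply, smul_eq_mul, neg_neg]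
      rw [hch', hsymm h' c, hch', hh'h', hwc]
      show _ = -4 * m + B (mul h' h') h'
      ring
    have hKey := key y hyA hyne
    have h2m : (0:ℝ) < 2 * m := by linarith
    have hrpos : (0:ℝ) < (2 * m) ^ (-(3:ℝ)/2) := Real.rpow_pos_of_pos h2m _
    have hu₀le : u₀ ≤ (-4 * m) * (2 * m) ^ (-(3:ℝ)/2) := by
      have h1 : u y ≤ -4 * m := by rw [huy]; linarith
      have h2 : u y * (B y y) ^ (-(3:ℝ)/2) = u y * (2 * m) ^ (-(3:ℝ)/2) := by rw [hyB]
      rw [h2] at hKey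
      nlinarith [hrpos, h1, hKey]
    have hu₀neg : u₀ < 0 := lt_of_le_of_lt hu₀le (by nlinarith [hrpos, hBcc])
    -- square bound
    have hsq : 2 ≤ u₀ ^ 2 * m := by
      have h3 : ((2 * m) ^ (-(3:ℝ)/2)) ^ 2 = ((2 * m) ^ (3:ℕ))⁻¹ := by
        rw [← Real.rpow_natCast ((2 * m) ^ (-(3:ℝ)/2)) 2, ← Real.rpow_mul h2m.le,
          ← Real.rpow_natCast (2 * m) 3, ← Real.rpow_neg h2m.le]
        norm_num
      have hK2 : ((-4 * m) * (2 * m) ^ (-(3:ℝ)/2)) ^ 2 = 2 / m := by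
        rw [mul_pow, h3]
        field_simp
        ring
      have hKneg : (-4 * m) * (2 * m) ^ (-(3:ℝ)/2) < 0 :=
        mul_neg_of_neg_of_pos (by linarith) hrpos
      have h4 : ((-4 * m) * (2 * m) ^ (-(3:ℝ)/2)) ^ 2 ≤ u₀ ^ 2 := by
        nlinarith [hu₀le, hKneg]
      rw [hK2] at h4
      have := (div_le_iff₀ hBcc).mp h4
      linarith
    -- construct the decomposition
    have hu₀ne : u₀ ≠ 0 := ne_of_lt hu₀neg
    set e : V := u₀⁻¹ • x₀ with he
    have heA : e ∈ A := Submodule.smul_mem A _ hx₀A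
    have hee : mul e e = e := by
      simp only [he, map_smul, LinearMap.smul_apply]
      rw [hx₀sq, smul_smul, smul_smul]
      congr 1
      field_simp
    have hce : mul c e = e := (memA e).mp heA
    have hene : e ≠ 0 := smul_ne_zero (inv_ne_zero hu₀ne) hx₀ne
    have henec : e ≠ c := by
      intro hec
      have hx₀c : x₀ = u₀ • c := by
        have : u₀ • e = x₀ := by
          rw [he, smul_smul]
          field_simp
          exact one_smul ℝ x₀
        rw [← this, hec]
      have h1 : (1:ℝ) = u₀ ^ 2 * m := by
        rw [← hx₀B, hx₀c]
        simp only [map_smul, LinearMap.smul_apply, smul_eq_mul, ← hm]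
        ring
      rw [← h1] at hsq
      linarith
    refine ⟨e, c - e, hee, ?_, hene, sub_ne_zero.mpr (Ne.symm henec), ?_, by abel⟩
    · simp only [map_sub, LinearMap.sub_apply, hc, hce, hcomm e c, hee]
      abel
    · rw [map_sub, hcomm e c, hce, hee, sub_self]
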